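/- Stability of a multi-layer GNN: let φ be an L-layer GNN where each layer l applies x ↦ σ(h^{(l)} ∗_S x) with σ 1-Lipschitz, σ(0)=0, and each filter satisfying ‖∑_k h_k^{(l)} S^k‖ ≤ 1 and ‖∑_k h_k^{(l)}(S^k − Ŝ^k)‖ ≤ Cε for ‖Ŝ − S‖ ≤ ε. Then for any x with ‖x‖ ≤ 1, ‖φ(x, S) − φ(x, Ŝ)‖ ≤ L C ε. -/

import Mathlib

open Finset

/-- Graph convolutional filter as an operator: `h ∗_S = ∑_{k=0}^{K-1} h_k S^k`. -/
noncomputable def graphFilter {N : ℕ} (K : ℕ) (h : ℕ → ℝ)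
    (S : EuclideanSpace ℝ (Fin N) →L[ℝ] EuclideanSpace ℝ (Fin N)) :
    EuclideanSpace ℝ (Fin N) →L[ℝ] EuclideanSpace ℝ (Fin N) :=
  ∑ k ∈ range K, h k • S ^ k

/-- Pointwise (componentwise) application of a scalar function to a Euclidean vector. -/
noncomputable def pointwiseApply {N : ℕ} (σ : ℝ → ℝ) (y : EuclideanSpace ℝ (Fin N)) :
    EuclideanSpace ℝ (Fin N) :=
  (WithLp.equiv 2 (Fin N → ℝ)).symm fun i => σ ((WithLp.equiv 2 (Fin N → ℝ)) y i)

/-- The `L`-layer GNN: `x_0 = x`, `x_l = σ(h^{(l)} ∗_S x_{l-1})`. -/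
noncomputable def gnn {N : ℕ} (σ : ℝ → ℝ) (K : ℕ) (h : ℕ → ℕ → ℝ)
    (S : EuclideanSpace ℝ (Fin N) →L[ℝ] EuclideanSpace ℝ (Fin N)) :
    ℕ → EuclideanSpace ℝ (Fin N) → EuclideanSpace ℝ (Fin N)
  | 0, x => x
  | l + 1, x => pointwiseApply σ (graphFilter K (h l) S (gnn σ K h S l x))

lemma pw_lip {N : ℕ} (σ : ℝ → ℝ) (hσ : ∀ a b : ℝ, |σ a - σ b| ≤ |a - b|)
    (y z : EuclideanSpace ℝ (Fin N)) :
    ‖pointwiseApply σ y - pointwiseApply σ z‖ ≤ ‖y - z‖ := by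
  rw [pointwiseApply, pointwiseApply, EuclideanSpace.norm_eq, EuclideanSpace.norm_eq]
  apply Real.sqrt_le_sqrt
  apply Finset.sum_le_sum
  intro i _
  have h1 := hσ (y i) (z i)
  simp only [WithLp.equiv, Equiv.refl_apply, Equiv.refl_symm]
  have : |σ (y i) - σ (z i)| ^ 2 ≤ |y i - z i| ^ 2 :=
    pow_le_pow_left₀ (abs_nonneg _) h1 2
  simpa [Real.norm_eq_abs] using this

lemma pw_zero {N : ℕ} (σ : ℝ → ℝ) (hσ0 : σ 0 = 0) :
    pointwiseApply σ (0 : EuclideanSpace ℝ (Fin N)) = 0 := by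
  ext i
  show σ ((0 : EuclideanSpace ℝ (Fin N)) i) = (0 : EuclideanSpace ℝ (Fin N)) i
  have : (0 : EuclideanSpace ℝ (Fin N)) i = 0 := rfl
  rw [this, hσ0]

lemma pw_norm {N : ℕ} (σ : ℝ → ℝ) (hσ : ∀ a b : ℝ, |σ a - σ b| ≤ |a - b|) (hσ0 : σ 0 = 0)
    (y : EuclideanSpace ℝ (Fin N)) : ‖pointwiseApply σ y‖ ≤ ‖y‖ := by
  have := pw_lip σ hσ y 0
  simpa [pw_zero σ hσ0] using this

/-- Stability of a multi-layer GNN: with a 1-Lipschitz nonlinearity fixing `0`, filters of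
operator norm at most `1`, and per-layer filter perturbations bounded by `C ε`, the `L`-layer
GNN satisfies `‖φ(x,S) − φ(x,T)‖ ≤ L C ε` for unit-norm inputs. -/
theorem multi_layer_gnn_stability {N : ℕ} (K L : ℕ) (h : ℕ → ℕ → ℝ) (σ : ℝ → ℝ)
    (hσ : ∀ a b : ℝ, |σ a - σ b| ≤ |a - b|) (hσ0 : σ 0 = 0) (C ε : ℝ)
    (S T : EuclideanSpace ℝ (Fin N) →L[ℝ] EuclideanSpace ℝ (Fin N))
    (hpert : ‖T - S‖ ≤ ε)
    (hnormS : ∀ l < L, ‖graphFilter K (h l) S‖ ≤ 1)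
    (hnormT : ∀ l < L, ‖graphFilter K (h l) T‖ ≤ 1)
    (hfiltpert : ∀ l < L, ‖graphFilter K (h l) S - graphFilter K (h l) T‖ ≤ C * ε)
    (x : EuclideanSpace ℝ (Fin N)) (hx : ‖x‖ ≤ 1) :
    ‖gnn σ K h S L x - gnn σ K h T L x‖ ≤ (L : ℝ) * C * ε := by
  suffices H : ∀ l ≤ L, ‖gnn σ K h S l x‖ ≤ 1 ∧ ‖gnn σ K h T l x‖ ≤ 1 ∧
      ‖gnn σ K h S l x - gnn σ K h T l x‖ ≤ (l : ℝ) * C * ε from (H L le_rfl).2.2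
  intro l hl
  induction l with
  | zero =>
    refine ⟨hx, hx, ?_⟩
    show ‖x - x‖ ≤ _
    simp
  | succ l ih =>
    have hlL : l < L := hl
    obtain ⟨hS1, hT1, hd⟩ := ih (le_of_lt hlL)
    set A := graphFilter K (h l) S
    set B := graphFilter K (h l) T
    set u := gnn σ K h S l x
    set v := gnn σ K h T l x
    have hA : ‖A‖ ≤ 1 := hnormS l hlL
    have hB : ‖B‖ ≤ 1 := hnormT l hlL
    have hAB : ‖A - B‖ ≤ C * ε := hfiltpert l hlL
    have hSu : ‖A u‖ ≤ 1 := by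
      calc ‖A u‖ ≤ ‖A‖ * ‖u‖ := A.le_opNorm u
        _ ≤ 1 * 1 := mul_le_mul hA hS1 (norm_nonneg _) zero_le_one
        _ = 1 := one_mul 1
    have hTv : ‖B v‖ ≤ 1 := by
      calc ‖B v‖ ≤ ‖B‖ * ‖v‖ := B.le_opNorm v
        _ ≤ 1 * 1 := mul_le_mul hB hT1 (norm_nonneg _) zero_le_one
        _ = 1 := one_mul 1
    refine ⟨?_, ?_, ?_⟩
    · show ‖pointwiseApply σ (A u)‖ ≤ 1
      exact (pw_norm σ hσ hσ0 _).trans hSu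
    · show ‖pointwiseApply σ (B v)‖ ≤ 1
      exact (pw_norm σ hσ hσ0 _).trans hTv
    · show ‖pointwiseApply σ (A u) - pointwiseApply σ (B v)‖ ≤ _
      have step1 : ‖A u - B v‖ ≤ ‖A (u - v)‖ + ‖(A - B) v‖ := by
        have : A u - B v = A (u - v) + (A - B) v := by
          simp [map_sub, ContinuousLinearMap.sub_apply]
        rw [this]; exact norm_add_le _ _
      have e1 : ‖A (u - v)‖ ≤ (l : ℝ) * C * ε := by
        calc ‖A (u - v)‖ ≤ ‖A‖ * ‖u - v‖ := A.le_opNorm _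
          _ ≤ 1 * ((l : ℝ) * C * ε) := mul_le_mul hA hd (norm_nonneg _) zero_le_one
          _ = (l : ℝ) * C * ε := one_mul _
      have e2 : ‖(A - B) v‖ ≤ C * ε := by
        calc ‖(A - B) v‖ ≤ ‖A - B‖ * ‖v‖ := (A - B).le_opNorm _
          _ ≤ (C * ε) * 1 := mul_le_mul hAB hT1 (norm_nonneg _) ((norm_nonneg _).trans hAB)
          _ = C * ε := mul_one _
      calc ‖pointwiseApply σ (A u) - pointwiseApply σ (B v)‖ ≤ ‖A u - B v‖ := pw_lip σ hσ _ _
        _ ≤ ‖A (u - v)‖ + ‖(A - B) v‖ := step1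
        _ ≤ (l : ℝ) * C * ε + C * ε := add_le_add e1 e2
        _ = ((l + 1 : ℕ) : ℝ) * C * ε := by push_cast; ring
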